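/- Let S be an irreducible norm-closed semigroup of complex n×n matrices simultaneously similar to a semigroup of partial isometries. Then σ(T) ⊆ {0} ∪ 𝕋 for all T ∈ S, the norms of nonzero elements of S are uniformly bounded above and below by positive constants, and all idempotents of S commute. -/

import Mathlib

open Matrix

/-- The operator norm of a complex matrix acting on `ℂ^n` with the standard
inner product. -/
noncomputable def opNorm {n : ℕ} (T : Matrix (Fin n) (Fin n) ℂ) : ℝ :=
  ‖Matrix.toEuclideanCLM (𝕜 := ℂ) T‖

/-- `T` is a partial isometry: both `Tᴴ * T` and `T * Tᴴ` are orthogonal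
projections. -/
def IsPartialIsometry {n : ℕ} (T : Matrix (Fin n) (Fin n) ℂ) : Prop :=
  (Tᴴ * T) * (Tᴴ * T) = Tᴴ * T ∧ (Tᴴ * T)ᴴ = Tᴴ * T ∧
  (T * Tᴴ) * (T * Tᴴ) = T * Tᴴ ∧ (T * Tᴴ)ᴴ = T * Tᴴ

section Aux

open ComplexOrder

variable {n : ℕ}

/-- An idempotent partial isometry is Hermitian. -/
lemma idem_pi_herm (E : Matrix (Fin n) (Fin n) ℂ) (hE : E * E = E)
    (hpi : IsPartialIsometry E) : Eᴴ = E := by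
  obtain ⟨h1, h2, -, -⟩ := hpi
  have hEK : Eᴴ * (Eᴴ * E) = Eᴴ * E := by
    rw [← mul_assoc, ← conjTranspose_mul, hE]
  have hKE : (Eᴴ * E) * E = Eᴴ * E := by
    rw [mul_assoc, hE]
  have key : (E - Eᴴ * E)ᴴ * (E - Eᴴ * E) = 0 := by
    rw [conjTranspose_sub, h2, sub_mul, mul_sub, mul_sub, hEK, hKE, h1]
    abel
  have := sub_eq_zero.mp (conjTranspose_mul_self_eq_zero.mp key)
  rw [this, h2, ← this]

/-- If `E, F` are Hermitian idempotents and `E * F` is a partial isometry, they commute. -/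
lemma herm_idem_comm (E F : Matrix (Fin n) (Fin n) ℂ)
    (hE : E * E = E) (hEh : Eᴴ = E) (hF : F * F = F) (hFh : Fᴴ = F)
    (hpi : IsPartialIsometry (E * F)) : E * F = F * E := by
  obtain ⟨h1, -, -, -⟩ := hpi
  have mE : ∀ X : Matrix (Fin n) (Fin n) ℂ, X * E * E = X * E := fun X => by
    rw [mul_assoc, hE]
  have mF : ∀ X : Matrix (Fin n) (Fin n) ℂ, X * F * F = X * F := fun X => by
    rw [mul_assoc, hF]
  have hTs : (E * F)ᴴ = F * E := by rw [conjTranspose_mul, hEh, hFh]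
  have hGdef : (E * F)ᴴ * (E * F) = F * E * F := by
    rw [hTs]; simp only [← mul_assoc]; rw [mE]
  rw [hGdef] at h1
  have key2 : F * E * F * E * F = F * E * F := by
    have := h1
    simp only [← mul_assoc] at this
    rwa [mF (F * E)] at this
  have hGh : (F * E * F)ᴴ = F * E * F := by
    simp only [conjTranspose_mul, hEh, hFh, mul_assoc]
  have key : (E * F - F * E * F)ᴴ * (E * F - F * E * F) = 0 := by
    rw [conjTranspose_sub, hTs, hGh, sub_mul, mul_sub, mul_sub]
    simp only [← mul_assoc]
    rw [mE F, mF (F * E), key2]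
    abel
  have hT : E * F = F * E * F := sub_eq_zero.mp (conjTranspose_mul_self_eq_zero.mp key)
  rw [← hTs, hT, hGh, ← hT]

/-- Hermitian idempotents with the same kernel are equal. -/
lemma herm_idem_ext (P P' : Matrix (Fin n) (Fin n) ℂ)
    (hP : P * P = P) (hPh : Pᴴ = P) (hP' : P' * P' = P') (hP'h : P'ᴴ = P')
    (hker : ∀ v, P *ᵥ v = 0 ↔ P' *ᵥ v = 0) : P = P' := by
  have main : ∀ A B : Matrix (Fin n) (Fin n) ℂ, A * A = A →
      (∀ v, A *ᵥ v = 0 → B *ᵥ v = 0) → B = B * A := by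
    intro A B hA hAB
    apply Matrix.toLin'.injective
    refine LinearMap.ext fun v => ?_
    have hz : A *ᵥ (v - A *ᵥ v) = 0 := by
      rw [mulVec_sub, mulVec_mulVec, hA, sub_self]
    have := hAB _ hz
    rw [mulVec_sub, sub_eq_zero] at this
    rw [Matrix.toLin'_apply, Matrix.toLin'_apply, ← mulVec_mulVec, ← this]
  have h1 : P' = P' * P := main P P' hP fun v hv => (hker v).mp hv
  have h2 : P = P * P' := main P' P hP' fun v hv => (hker v).mpr hv
  calc P = P * P' := h2
    _ = (P'ᴴ * Pᴴ)ᴴ := by rw [← conjTranspose_mul, conjTranspose_conjTranspose]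
    _ = (P' * P)ᴴ := by rw [hPh, hP'h]
    _ = P'ᴴ := by rw [← h1]
    _ = P' := hP'h

lemma dot_id (B : Matrix (Fin n) (Fin n) ℂ) (v : Fin n → ℂ) :
    star (B *ᵥ v) ⬝ᵥ (B *ᵥ v) = star v ⬝ᵥ ((Bᴴ * B) *ᵥ v) := by
  rw [star_mulVec, dotProduct_mulVec, dotProduct_mulVec, vecMul_vecMul]

lemma ker_BB (B : Matrix (Fin n) (Fin n) ℂ) (v : Fin n → ℂ) :
    (Bᴴ * B) *ᵥ v = 0 ↔ B *ᵥ v = 0 := by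
  constructor
  · intro h
    have : star (B *ᵥ v) ⬝ᵥ (B *ᵥ v) = 0 := by rw [dot_id, h, dotProduct_zero]
    exact dotProduct_star_self_eq_zero.mp this
  · intro h
    rw [← mulVec_mulVec, h, mulVec_zero]

lemma opNorm_nonneg (A : Matrix (Fin n) (Fin n) ℂ) : 0 ≤ opNorm A :=
  norm_nonneg _

lemma opNorm_mul_le (A B : Matrix (Fin n) (Fin n) ℂ) :
    opNorm (A * B) ≤ opNorm A * opNorm B := by
  unfold opNorm
  rw [_root_.map_mul]
  exact norm_mul_le _ _

lemma dot_star_self_ne_zero (v : Fin n → ℂ) (hv : v ≠ 0) : star v ⬝ᵥ v ≠ 0 :=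
  fun h => hv (dotProduct_star_self_eq_zero.mp h)

/-- A nonzero partial isometry has operator norm one. -/
lemma pi_opNorm_one (A : Matrix (Fin n) (Fin n) ℂ) (hA : A ≠ 0)
    (hpi : IsPartialIsometry A) : opNorm A = 1 := by
  obtain ⟨h1, h2, -, -⟩ := hpi
  set a := Matrix.toEuclideanCLM (𝕜 := ℂ) A with ha
  have hsa : star a * a = Matrix.toEuclideanCLM (𝕜 := ℂ) (Aᴴ * A) := by
    rw [_root_.map_mul, ← Matrix.star_eq_conjTranspose, map_star]
  have hidem : (star a * a) * (star a * a) = star a * a := by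
    rw [hsa, ← _root_.map_mul, h1]
  have hherm : star (star a * a) = star a * a := by
    rw [hsa, ← map_star, Matrix.star_eq_conjTranspose, h2]
  have hnn : ‖star a * a‖ = ‖a‖ * ‖a‖ := CStarRing.norm_star_mul_self (x := a)
  have hsq : ‖star a * a‖ * ‖star a * a‖ = ‖star a * a‖ :=
    calc ‖star a * a‖ * ‖star a * a‖
        = ‖star (star a * a) * (star a * a)‖ := (CStarRing.norm_star_mul_self (x := star a * a)).symm
      _ = ‖star a * a‖ := by rw [hherm, hidem]
  have hane : a ≠ 0 := by
    intro h
    exact hA (EmbeddingLike.map_eq_zero_iff.mp (ha ▸ h))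
  have h3 : ‖a‖ ≠ 0 := norm_ne_zero_iff.mpr hane
  have hx : ‖star a * a‖ ≠ 0 := by rw [hnn]; exact mul_ne_zero h3 h3
  have h4 : ‖star a * a‖ = 1 := by
    have := hsq
    nth_rewrite 3 [← mul_one ‖star a * a‖] at this
    exact mul_left_cancel₀ hx this
  have h5 : ‖a‖ * ‖a‖ = 1 := by rw [← hnn, h4]
  have : opNorm A = ‖a‖ := by unfold opNorm; rw [← ha]
  rw [this]
  nlinarith [norm_nonneg a]

end Aux

/-- (i) ⇒ (ii), (iii) of the main theorem: if an irreducible norm-closed matrix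
semigroup is simultaneously similar to a semigroup of partial isometries, then
the spectrum of each element lies in `{0} ∪ 𝕋`, the norms of nonzero elements
are uniformly bounded above and below by positive constants, and all idempotents
commute. -/
theorem stmt18 {n : ℕ} (S : Set (Matrix (Fin n) (Fin n) ℂ))
    (hmul : ∀ A ∈ S, ∀ B ∈ S, A * B ∈ S)
    (hclosed : IsClosed S)
    (hirr : ∀ V : Submodule ℂ (Fin n → ℂ),
      (∀ T ∈ S, ∀ x ∈ V, T.mulVec x ∈ V) → V = ⊥ ∨ V = ⊤)
    (hsim : ∃ Q : Matrix (Fin n) (Fin n) ℂ, IsUnit Q ∧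
      ∀ T ∈ S, IsPartialIsometry (Q * T * Q⁻¹)) :
    (∀ T ∈ S, spectrum ℂ T ⊆ {0} ∪ {z : ℂ | ‖z‖ = 1}) ∧
    (∃ c₁ c₂ : ℝ, 0 < c₁ ∧ 0 < c₂ ∧
      ∀ T ∈ S, T ≠ 0 → c₁ ≤ opNorm T ∧ opNorm T ≤ c₂) ∧
    (∀ P ∈ S, ∀ Q ∈ S, P * P = P → Q * Q = Q → P * Q = Q * P) := by
  obtain ⟨Q, hQ, hpi⟩ := hsim
  have hdet : IsUnit Q.det := (Matrix.isUnit_iff_isUnit_det Q).mp hQ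
  have hQQ : Q * Q⁻¹ = 1 := Matrix.mul_nonsing_inv Q hdet
  have hQQ' : Q⁻¹ * Q = 1 := Matrix.nonsing_inv_mul Q hdet
  have hconj : ∀ X Y : Matrix (Fin n) (Fin n) ℂ,
      (Q * X * Q⁻¹) * (Q * Y * Q⁻¹) = Q * (X * Y) * Q⁻¹ := by
    intro X Y
    simp only [mul_assoc]
    rw [← mul_assoc Q⁻¹ Q, hQQ', one_mul]
  have cancel : ∀ M : Matrix (Fin n) (Fin n) ℂ, Q⁻¹ * (Q * M * Q⁻¹ * Q) = M := by
    intro M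
    rw [mul_assoc (Q * M) Q⁻¹ Q, hQQ', mul_one, ← mul_assoc, hQQ', one_mul]
  have hconjpow : ∀ X : Matrix (Fin n) (Fin n) ℂ, ∀ k : ℕ,
      (Q * X * Q⁻¹) ^ k = Q * X ^ k * Q⁻¹ := by
    intro X k
    induction k with
    | zero => rw [pow_zero, pow_zero, mul_one, hQQ]
    | succ k ih => rw [pow_succ, pow_succ, ih, hconj]
  have hpowmem : ∀ T ∈ S, ∀ k : ℕ, T ^ (k + 1) ∈ S := by
    intro T hT k
    induction k with
    | zero => simpa using hT
    | succ k ih => rw [pow_succ]; exact hmul _ ih _ hT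
  refine ⟨?_, ?_, ?_⟩
  · -- spectrum
    intro T hT lam hlam
    by_cases h0 : lam = 0
    · exact Or.inl h0
    right
    show ‖lam‖ = 1
    obtain ⟨u, hu⟩ := hQ
    have hspec : lam ∈ spectrum ℂ (Q * T * Q⁻¹) := by
      rw [← hu, ← Matrix.coe_units_inv, spectrum.units_conjugate]
      exact hlam
    set A := Q * T * Q⁻¹ with hA
    set g := Matrix.toLinAlgEquiv' A with hg
    have hspec2 : lam ∈ spectrum ℂ g := by
      rw [hg, AlgEquiv.spectrum_eq]; exact hspec
    have hev : Module.End.HasEigenvalue g lam :=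
      Module.End.hasEigenvalue_iff_mem_spectrum.mpr hspec2
    obtain ⟨x, hx⟩ := hev.exists_hasEigenvector
    have hxne : x ≠ 0 := hx.right
    have hgk : ∀ k : ℕ, ∀ v, A ^ k *ᵥ v = (g ^ k) v := by
      intro k v
      rw [hg, ← map_pow, Matrix.toLinAlgEquiv'_apply]
    have hpow_apply : ∀ k : ℕ, A ^ k *ᵥ x = lam ^ k • x := by
      intro k
      rw [hgk k x]
      exact hx.pow_apply k
    have hfr : Module.finrank ℂ (Fin n → ℂ) = n := Module.finrank_fin_fun ℂ
    have hk1 : LinearMap.ker (g ^ (n + 1)) = LinearMap.ker (g ^ (n + 2)) := by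
      rw [Module.End.ker_pow_eq_ker_pow_finrank_of_le (f := g) (m := n + 1) (by omega),
        Module.End.ker_pow_eq_ker_pow_finrank_of_le (f := g) (m := n + 2) (by omega)]
    have hkeq : ∀ v, A ^ (n + 1) *ᵥ v = 0 ↔ A ^ (n + 2) *ᵥ v = 0 := by
      intro v
      rw [hgk, hgk, ← LinearMap.mem_ker, ← LinearMap.mem_ker, hk1]
    have hApi : ∀ k : ℕ, IsPartialIsometry (A ^ (k + 1)) := by
      intro k
      have h := hpi (T ^ (k + 1)) (hpowmem T hT k)
      rwa [← hconjpow, ← hA] at h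
    obtain ⟨p1a, p1b, -, -⟩ := hApi n
    obtain ⟨p2a, p2b, -, -⟩ := hApi (n + 1)
    have hPeq : (A ^ (n + 1))ᴴ * A ^ (n + 1) = (A ^ (n + 2))ᴴ * A ^ (n + 2) :=
      herm_idem_ext _ _ p1a p1b p2a p2b (fun v => by rw [ker_BB, ker_BB]; exact hkeq v)
    have e : star x ⬝ᵥ (((A ^ (n + 1))ᴴ * A ^ (n + 1)) *ᵥ x)
        = star x ⬝ᵥ (((A ^ (n + 2))ᴴ * A ^ (n + 2)) *ᵥ x) := by rw [hPeq]
    rw [← dot_id, ← dot_id, hpow_apply, hpow_apply] at e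
    simp only [star_smul, smul_dotProduct, dotProduct_smul, smul_eq_mul, star_pow] at e
    have s_ne : star x ⬝ᵥ x ≠ 0 := dot_star_self_ne_zero x hxne
    have e2 : (star lam * lam) ^ (n + 1) * (star x ⬝ᵥ x)
        = (star lam * lam) ^ (n + 2) * (star x ⬝ᵥ x) := by
      rw [mul_pow, mul_pow]
      linear_combination e
    have hmu1 : (star lam * lam) ^ (n + 1) = (star lam * lam) ^ (n + 2) :=
      mul_right_cancel₀ s_ne e2
    have hmune : star lam * lam ≠ 0 := mul_ne_zero (star_ne_zero.mpr h0) h0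
    have hmu : star lam * lam = 1 := by
      have h5 : (star lam * lam) ^ (n + 1) * 1
          = (star lam * lam) ^ (n + 1) * (star lam * lam) := by
        rw [mul_one, ← pow_succ]
        exact hmu1
      exact (mul_left_cancel₀ (pow_ne_zero _ hmune) h5).symm
    have hmc : lam * (starRingEnd ℂ) lam = 1 := by
      rw [mul_comm]; exact hmu
    have hns : (Complex.normSq lam : ℂ) = 1 := by rw [← Complex.mul_conj, hmc]
    have hns' : Complex.normSq lam = 1 := by exact_mod_cast hns
    have habs : ‖lam‖ * ‖lam‖ = 1 := by
      rw [← sq, Complex.sq_norm, hns']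
    nlinarith [norm_nonneg lam, habs]
  · -- norms
    have hq := opNorm_nonneg Q
    have hq' := opNorm_nonneg (Q⁻¹)
    have hqq'pos : (0 : ℝ) < opNorm Q * opNorm Q⁻¹ + 1 := by
      have := mul_nonneg hq hq'
      linarith
    refine ⟨(opNorm Q * opNorm Q⁻¹ + 1)⁻¹, opNorm Q * opNorm Q⁻¹ + 1, inv_pos.mpr hqq'pos,
      hqq'pos, ?_⟩
    intro T hT hTne
    have hAne : Q * T * Q⁻¹ ≠ 0 := by
      intro h
      apply hTne
      have := cancel T
      rw [show Q * T * Q⁻¹ * Q = (Q * T * Q⁻¹) * Q from rfl, h, zero_mul, mul_zero] at this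
      exact this.symm
    have hA1 : opNorm (Q * T * Q⁻¹) = 1 := pi_opNorm_one _ hAne (hpi T hT)
    have ht := opNorm_nonneg T
    constructor
    · -- lower bound
      have hup : (1 : ℝ) ≤ opNorm Q * opNorm T * opNorm Q⁻¹ := by
        calc (1 : ℝ) = opNorm (Q * T * Q⁻¹) := hA1.symm
          _ ≤ opNorm (Q * T) * opNorm Q⁻¹ := opNorm_mul_le _ _
          _ ≤ opNorm Q * opNorm T * opNorm Q⁻¹ := by
              have := opNorm_mul_le Q T
              nlinarith
      rw [inv_eq_one_div, div_le_iff₀ hqq'pos]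
      nlinarith
    · -- upper bound
      have : opNorm T ≤ opNorm Q⁻¹ * (opNorm (Q * T * Q⁻¹) * opNorm Q) := by
        calc opNorm T = opNorm (Q⁻¹ * (Q * T * Q⁻¹ * Q)) := by rw [cancel]
          _ ≤ opNorm Q⁻¹ * opNorm (Q * T * Q⁻¹ * Q) := opNorm_mul_le _ _
          _ ≤ opNorm Q⁻¹ * (opNorm (Q * T * Q⁻¹) * opNorm Q) := by
              have := opNorm_mul_le (Q * T * Q⁻¹) Q
              have := opNorm_nonneg (Q * T * Q⁻¹ * Q)
              nlinarith
      rw [hA1] at this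
      nlinarith
  · -- idempotents commute
    intro P hP R hR hPP hRR
    have hE : (Q * P * Q⁻¹) * (Q * P * Q⁻¹) = Q * P * Q⁻¹ := by rw [hconj, hPP]
    have hF : (Q * R * Q⁻¹) * (Q * R * Q⁻¹) = Q * R * Q⁻¹ := by rw [hconj, hRR]
    have hEh := idem_pi_herm _ hE (hpi P hP)
    have hFh := idem_pi_herm _ hF (hpi R hR)
    have hpiEF : IsPartialIsometry ((Q * P * Q⁻¹) * (Q * R * Q⁻¹)) := by
      rw [hconj]
      exact hpi _ (hmul P hP R hR)
    have hcomm := herm_idem_comm _ _ hE hEh hF hFh hpiEF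
    rw [hconj, hconj] at hcomm
    calc P * R = Q⁻¹ * (Q * (P * R) * Q⁻¹ * Q) := (cancel _).symm
      _ = Q⁻¹ * (Q * (R * P) * Q⁻¹ * Q) := by rw [hcomm]
      _ = R * P := cancel _
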